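/- There exist finite sets C, D ⊆ 𝔽₂^21 such that: every element of C has Hamming weight exactly 8; any two distinct elements of C have Hamming distance at least 8; |C| = 210; any two distinct elements of D have Hamming distance at least 6; |D| = 2048; and every d ∈ D satisfies Σᵢ dᵢcᵢ = 0 in 𝔽₂ for every c ∈ C. -/

import Mathlib

set_option maxRecDepth 100000

namespace Codes21



def wt : ℕ → ℕ → ℕ
  | 0, _ => 0
  | k+1, n => n % 2 + wt k (n / 2)

def toVec (n : ℕ) : Fin 21 → ZMod 2 := fun i => if n.testBit i.val then 1 else 0

def mkCode : List ℕ → List ℕ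
  | [] => [0]
  | g :: gs => mkCode gs ++ (mkCode gs).map (· ^^^ g)

def chk (P : ℕ → Bool) : List ℕ → ℕ → Bool
  | [], acc => P acc
  | g :: gs, acc => chk P gs acc && chk P gs (acc ^^^ g)

lemma chk_sound (P : ℕ → Bool) : ∀ gs acc, chk P gs acc = true →
    ∀ x ∈ mkCode gs, P (x ^^^ acc) = true := by
  intro gs
  induction gs with
  | nil =>
    intro acc h x hx
    simp only [mkCode, List.mem_singleton] at hx
    subst hx
    simpa [chk, Nat.zero_xor] using h
  | cons g gs ih =>
    intro acc h x hx
    simp only [chk, Bool.and_eq_true] at h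
    simp only [mkCode, List.mem_append, List.mem_map] at hx
    rcases hx with hx | ⟨y, hy, rfl⟩
    · exact ih acc h.1 x hx
    · have e : y ^^^ g ^^^ acc = y ^^^ (acc ^^^ g) := by
        rw [Nat.xor_assoc, Nat.xor_comm g acc]
      rw [e]
      exact ih (acc ^^^ g) h.2 y hy

lemma chk_sound' (P : ℕ → Bool) (gs : List ℕ) (h : chk P gs 0 = true) :
    ∀ x ∈ mkCode gs, P x = true := by
  intro x hx
  simpa [Nat.xor_zero] using chk_sound P gs 0 h x hx

lemma xor_mem : ∀ (gs : List ℕ), ∀ x ∈ mkCode gs, ∀ y ∈ mkCode gs, x ^^^ y ∈ mkCode gs := by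
  intro gs
  induction gs with
  | nil =>
    intro x hx y hy
    simp only [mkCode, List.mem_singleton] at *
    subst hx; subst hy; rfl
  | cons g gs ih =>
    intro x hx y hy
    simp only [mkCode, List.mem_append, List.mem_map] at hx hy ⊢
    rcases hx with hx | ⟨a, ha, rfl⟩ <;> rcases hy with hy | ⟨b, hb, rfl⟩
    · exact Or.inl (ih x hx y hy)
    · refine Or.inr ⟨x ^^^ b, ih x hx b hb, ?_⟩
      rw [Nat.xor_assoc]
    · refine Or.inr ⟨a ^^^ y, ih a ha y hy, ?_⟩
      rw [Nat.xor_assoc, Nat.xor_comm y g, ← Nat.xor_assoc]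
    · refine Or.inl ?_
      have : a ^^^ g ^^^ (b ^^^ g) = a ^^^ b := by
        rw [Nat.xor_assoc, Nat.xor_comm b g, ← Nat.xor_assoc g g b, Nat.xor_self,
          Nat.zero_xor]
      rw [this]
      exact ih a ha b hb

lemma mkCode_ind (P : ℕ → Prop) : ∀ (gs : List ℕ), P 0 →
    (∀ g ∈ gs, ∀ m, P m → P (m ^^^ g)) → ∀ x ∈ mkCode gs, P x := by
  intro gs
  induction gs with
  | nil =>
    intro h0 _ x hx
    simp only [mkCode, List.mem_singleton] at hx
    subst hx; exact h0
  | cons g gs ih =>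
    intro h0 hstep x hx
    simp only [mkCode, List.mem_append, List.mem_map] at hx
    rcases hx with hx | ⟨y, hy, rfl⟩
    · exact ih h0 (fun g' hg' => hstep g' (List.mem_cons_of_mem _ hg')) x hx
    · exact hstep g List.mem_cons_self y
        (ih h0 (fun g' hg' => hstep g' (List.mem_cons_of_mem _ hg')) y hy)

def reduce : List (ℕ × ℕ) → ℕ → ℕ
  | [], x => x
  | (b, g) :: gs, x => reduce gs (if x.testBit b then x ^^^ g else x)

lemma reduce_mem : ∀ (gs : List (ℕ × ℕ)) (x : ℕ), reduce gs x = 0 →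
    x ∈ mkCode (gs.map Prod.snd) := by
  intro gs
  induction gs with
  | nil =>
    intro x hx
    simp only [reduce] at hx
    simp [mkCode, hx]
  | cons p gs ih =>
    obtain ⟨b, g⟩ := p
    intro x hx
    simp only [reduce] at hx
    have h' := ih _ hx
    simp only [List.map_cons, mkCode, List.mem_append, List.mem_map]
    by_cases hb : x.testBit b
    · rw [if_pos hb] at h'
      refine Or.inr ⟨x ^^^ g, h', ?_⟩
      rw [Nat.xor_assoc, Nat.xor_self, Nat.xor_zero]
    · rw [if_neg hb] at h'
      exact Or.inl h'

def goodb : List (ℕ × ℕ) → Bool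
  | [] => true
  | (b, g) :: gs => (gs.all fun h => decide (h.2 < 2 ^ b)) && decide (2 ^ b ≤ g)
      && decide (g < 2 ^ (b + 1)) && goodb gs

lemma mkCode_lt : ∀ (gs : List ℕ) (N : ℕ), (∀ g ∈ gs, g < 2 ^ N) →
    ∀ x ∈ mkCode gs, x < 2 ^ N := by
  intro gs
  induction gs with
  | nil =>
    intro N _ x hx
    simp only [mkCode, List.mem_singleton] at hx
    subst hx; exact Nat.pow_pos (by norm_num)
  | cons g gs ih =>
    intro N h x hx
    simp only [mkCode, List.mem_append, List.mem_map] at hx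
    rcases hx with hx | ⟨y, hy, rfl⟩
    · exact ih N (fun g' hg' => h g' (List.mem_cons_of_mem _ hg')) x hx
    · exact Nat.xor_lt_two_pow (ih N (fun g' hg' => h g' (List.mem_cons_of_mem _ hg')) y hy)
        (h g List.mem_cons_self)

lemma testBit_of_between {g b : ℕ} (h1 : 2 ^ b ≤ g) (h2 : g < 2 ^ (b + 1)) :
    g.testBit b = true := by
  rw [Nat.testBit_eq_decide_div_mod_eq]
  have : g / 2 ^ b = 1 := by
    apply Nat.div_eq_of_lt_le <;> rw [Nat.pow_succ] at * <;> omega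
  simp [this]

lemma nodup_mkCode : ∀ (gs : List (ℕ × ℕ)), goodb gs = true →
    (mkCode (gs.map Prod.snd)).Nodup := by
  intro gs
  induction gs with
  | nil => intro _; simp [mkCode]
  | cons p gs ih =>
    obtain ⟨b, g⟩ := p
    intro h
    simp only [goodb, Bool.and_eq_true, List.all_eq_true, decide_eq_true_eq] at h
    obtain ⟨⟨⟨hall, hle⟩, hlt⟩, hgood⟩ := h
    have hnd := ih hgood
    have hbound : ∀ x ∈ mkCode (gs.map Prod.snd), x < 2 ^ b := by
      apply mkCode_lt
      intro g' hg'
      simp only [List.mem_map] at hg'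
      obtain ⟨q, hq, rfl⟩ := hg'
      exact hall q hq
    simp only [List.map_cons, mkCode]
    rw [List.nodup_append]
    refine ⟨hnd, hnd.map ?_, ?_⟩
    · intro a b' hab
      have hab' : a ^^^ g = b' ^^^ g := hab
      have : a ^^^ g ^^^ g = b' ^^^ g ^^^ g := by rw [hab']
      rwa [Nat.xor_assoc, Nat.xor_self, Nat.xor_zero, Nat.xor_assoc, Nat.xor_self,
        Nat.xor_zero] at this
    · intro x hx _ hx' rfl
      simp only [List.mem_map] at hx'
      obtain ⟨y, hy, rfl⟩ := hx'
      have h1 : (y ^^^ g).testBit b = true := by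
        rw [Nat.testBit_xor, Nat.testBit_lt_two_pow (hbound y hy),
          testBit_of_between hle hlt]
        rfl
      have h2 : (y ^^^ g).testBit b = false :=
        Nat.testBit_lt_two_pow (hbound _ hx)
      rw [h1] at h2
      exact Bool.noConfusion h2



lemma wt_eq : ∀ (k n : ℕ), wt k n = ∑ i : Fin k, if n.testBit i.val then 1 else 0 := by
  intro k
  induction k with
  | zero => intro n; simp [wt]
  | succ k ih =>
    intro n
    rw [Fin.sum_univ_succ]
    simp only [wt, Fin.val_zero, Fin.val_succ]
    have h0 : (if n.testBit 0 then 1 else 0) = n % 2 := by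
      rw [Nat.testBit_zero]
      rcases Nat.mod_two_eq_zero_or_one n with h | h <;> simp [h]
    have h1 : ∀ i : Fin k, n.testBit (i.val + 1) = (n / 2).testBit i.val := by
      intro i; exact Nat.testBit_succ n i.val
    rw [ih (n / 2), ← h0]
    congr 1
    exact Finset.sum_congr rfl fun i _ => by simp [h1 i]

lemma hammingNorm_toVec (n : ℕ) : hammingNorm (toVec n) = wt 21 n := by
  have : hammingNorm (toVec n) = ∑ i : Fin 21, if n.testBit i.val then 1 else 0 := by
    rw [hammingNorm, Finset.card_filter]
    refine Finset.sum_congr rfl fun i _ => ?_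
    by_cases h : n.testBit i.val <;> simp [toVec, h]
  rw [this, wt_eq]

lemma toVec_sub (m n : ℕ) : toVec m - toVec n = toVec (m ^^^ n) := by
  funext i
  simp only [Pi.sub_apply, toVec, Nat.testBit_xor]
  cases hm : m.testBit i.val <;> cases hn : n.testBit i.val <;> simp <;> decide

lemma toVec_add (m n : ℕ) : toVec (m ^^^ n) = toVec m + toVec n := by
  funext i
  simp only [Pi.add_apply, toVec, Nat.testBit_xor]
  cases hm : m.testBit i.val <;> cases hn : n.testBit i.val <;> simp <;> decide

lemma hammingDist_toVec (m n : ℕ) : hammingDist (toVec m) (toVec n) = wt 21 (m ^^^ n) := by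
  rw [hammingDist_eq_hammingNorm, neg_add_eq_sub, toVec_sub, hammingNorm_toVec, Nat.xor_comm]

lemma toVec_injOn {m n : ℕ} (hm : m < 2 ^ 21) (hn : n < 2 ^ 21)
    (h : toVec m = toVec n) : m = n := by
  apply Nat.eq_of_testBit_eq
  intro i
  by_cases hi : i < 21
  · have := congrFun h ⟨i, hi⟩
    simp only [toVec] at this
    cases hm' : m.testBit i <;> cases hn' : n.testBit i <;>
      simp [hm', hn'] at this ⊢ <;> exact absurd this (by decide)
  · rw [Nat.testBit_lt_two_pow, Nat.testBit_lt_two_pow]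
    · exact lt_of_lt_of_le hn (Nat.pow_le_pow_right (by norm_num) (by omega))
    · exact lt_of_lt_of_le hm (Nat.pow_le_pow_right (by norm_num) (by omega))

lemma toVec_zero : toVec 0 = 0 := by
  funext i; simp [toVec, Nat.zero_testBit]

lemma sum_orth {m n : ℕ} (h : wt 21 (m &&& n) % 2 = 0) :
    ∑ i : Fin 21, toVec m i * toVec n i = 0 := by
  have key : ∀ i : Fin 21, toVec m i * toVec n i
      = ((if (m &&& n).testBit i.val then 1 else 0 : ℕ) : ZMod 2) := by
    intro i
    simp only [toVec, Nat.testBit_and]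
    cases hm : m.testBit i.val <;> cases hn : n.testBit i.val <;> simp
  rw [Finset.sum_congr rfl fun i _ => key i, ← Nat.cast_sum, ← wt_eq]
  obtain ⟨k, hk⟩ := (Nat.even_iff).mpr h
  rw [hk]
  push_cast
  exact CharTwo.add_self_eq_zero _
def pgensD : List (ℕ × ℕ) := [(20, 1049445), (19, 529012), (18, 266541), (17, 135499), (16, 70173), (15, 36922), (14, 21254), (13, 13107), (11, 2396), (10, 1619), (7, 255)]

def gensD : List ℕ := pgensD.map Prod.snd

def pgensE : List (ℕ × ℕ) := [(20, 1118584), (19, 591418), (18, 329059), (17, 197462), (15, 38505), (14, 21845), (13, 13107), (11, 3855), (7, 255)]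

def gensE : List ℕ := pgensE.map Prod.snd

def Cnats : List ℕ := [255, 3855, 4080, 13107, 13260, 15420, 15555, 21845, 21930, 23130, 23205, 26214, 26265, 26985, 27030, 38505, 38550, 39270, 39321, 42330, 42405, 43605, 43690, 49980, 50115, 52275, 52428, 61455, 61680, 65280, 197462, 197545, 199769, 199846, 208997, 209050, 218627, 219404, 222512, 223936, 234944, 236080, 239116, 239875, 245866, 245909, 329059, 329116, 330348, 330387, 341584, 342432, 348214, 348361, 353029, 355338, 365322, 367621, 368697, 368838, 378528, 379216, 394805, 394954, 395578, 395717, 406790, 408073, 414560, 416912, 417875, 417964, 430172, 430243, 435088, 437344, 443657, 444934, 591418, 591557, 592181, 592330, 603401, 604678, 611216, 613472, 614492, 614563, 626771, 626860, 631648, 634000, 640262, 641545, 656748, 656787, 658019, 658076, 669344, 670032, 675897, 676038, 680714, 683013, 692997, 695306, 696374, 696521, 706128, 706976, 787289, 787366, 789590, 789673, 798826, 798869, 808460, 809219, 812480, 813616, 824624, 826048, 828931, 829708, 835685, 835738, 983055, 983280, 986880, 1044480, 1118584, 1118599, 1121928, 1122891, 1122996, 1125700, 1131565, 1131730, 1133346,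 1144849, 1148689, 1148958, 1149153, 1160226, 1167940, 1171848, 1184302, 1184465, 1187105, 1188125, 1188322, 1191442, 1197956, 1198196, 1198219, 1209416, 1213511, 1213624, 1215304, 1226884, 1233170, 1237537, 1315867, 1316068, 1317652, 1320744, 1320999, 1321176, 1327438, 1327537, 1330753, 1340034, 1344114, 1344141, 1346946, 1356097, 1366056, 1369108, 1513538, 1516673, 1524248, 1540388, 1578818, 1579085, 1579186, 1582193, 1582222, 1584001, 1589783, 1589992, 1592600, 1601828, 1605931, 1606100, 1609252, 1618456, 1627265, 1632322, 1774612, 1779752, 1786177, 1802882, 1905185, 1909010, 1919108, 1934408, 1970568, 1974852, 1983522, 2000913]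

lemma hC8 : ∀ m ∈ Cnats, wt 21 m = 8 := by decide
lemma hClt : ∀ m ∈ Cnats, m < 2 ^ 21 := by decide
lemma hClen : Cnats.length = 210 := by decide
lemma hCnodup : Cnats.Nodup := by decide
lemma hCE : ∀ m ∈ Cnats, reduce pgensE m = 0 := by decide
lemma hDgood : goodb pgensD = true := by decide
lemma hDlt : ∀ g ∈ gensD, g < 2 ^ 21 := by decide
lemma hEmin : chk (fun x => x == 0 || decide (8 ≤ wt 21 x)) gensE 0 = true := by decide
lemma hDminc : chk (fun x => x == 0 || decide (6 ≤ wt 21 x)) gensD 0 = true := by decide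
lemma hOrth : ∀ g ∈ gensD, ∀ n ∈ Cnats, wt 21 (g &&& n) % 2 = 0 := by decide

lemma mkCode_length : ∀ gs : List ℕ, (mkCode gs).length = 2 ^ gs.length := by
  intro gs
  induction gs with
  | nil => rfl
  | cons g gs ih =>
    simp only [mkCode, List.length_append, List.length_map, ih, List.length_cons,
      Nat.pow_succ]
    ring

def Cfin : Finset (Fin 21 → ZMod 2) := (Cnats.toFinset).image toVec
def Dfin : Finset (Fin 21 → ZMod 2) := ((mkCode gensD).toFinset).image toVec

lemma mem_Cfin {c : Fin 21 → ZMod 2} (hc : c ∈ Cfin) :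
    ∃ m ∈ Cnats, toVec m = c := by
  simpa [Cfin, List.mem_toFinset] using hc

lemma mem_Dfin {d : Fin 21 → ZMod 2} (hd : d ∈ Dfin) :
    ∃ m ∈ mkCode gensD, toVec m = d := by
  simpa [Dfin, List.mem_toFinset] using hd

lemma hEmem : ∀ m ∈ Cnats, m ∈ mkCode gensE :=
  fun m hm => reduce_mem pgensE m (hCE m hm)

end Codes21

open Codes21 in
/-- There exist codes `C, D ⊆ 𝔽₂^21` such that every element of `C` has Hamming
weight exactly 8, distinct elements of `C` are at Hamming distance at least 8,
`|C| = 210`, distinct elements of `D` are at Hamming distance at least 6,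
`|D| = 2048`, and every element of `D` is orthogonal (mod 2) to every element of `C`. -/
theorem exists_codes_dim21 :
    ∃ C D : Finset (Fin 21 → ZMod 2),
      (∀ c ∈ C, hammingNorm c = 8) ∧
      (∀ c ∈ C, ∀ c' ∈ C, c ≠ c' → 8 ≤ hammingDist c c') ∧
      C.card = 210 ∧
      (∀ d ∈ D, ∀ d' ∈ D, d ≠ d' → 6 ≤ hammingDist d d') ∧
      D.card = 2048 ∧
      (∀ d ∈ D, ∀ c ∈ C, (∑ i : Fin 21, d i * c i) = 0) := by
  refine ⟨Cfin, Dfin, ?_, ?_, ?_, ?_, ?_, ?_⟩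
  · intro c hc
    obtain ⟨m, hm, rfl⟩ := mem_Cfin hc
    rw [hammingNorm_toVec]
    exact hC8 m hm
  · intro c hc c' hc' hne
    obtain ⟨m, hm, rfl⟩ := mem_Cfin hc
    obtain ⟨n, hn, rfl⟩ := mem_Cfin hc'
    have hmn : m ≠ n := fun h => hne (by rw [h])
    rw [hammingDist_toVec]
    have hx := xor_mem gensE _ (hEmem m hm) _ (hEmem n hn)
    have hval := chk_sound' _ gensE hEmin _ hx
    rcases (by simpa using hval : m ^^^ n = 0 ∨ 8 ≤ wt 21 (m ^^^ n)) with h | h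
    · exact absurd (by have h' := congrArg (· ^^^ n) h; simp only [Nat.xor_assoc, Nat.xor_self, Nat.xor_zero, Nat.zero_xor] at h'; exact h') hmn
    · exact h
  · rw [Cfin, Finset.card_image_of_injOn, List.toFinset_card_of_nodup hCnodup, hClen]
    intro a ha b hb h
    rw [Finset.mem_coe, List.mem_toFinset] at ha hb
    exact toVec_injOn (hClt a ha) (hClt b hb) h
  · intro d hd d' hd' hne
    obtain ⟨m, hm, rfl⟩ := mem_Dfin hd
    obtain ⟨n, hn, rfl⟩ := mem_Dfin hd'
    have hmn : m ≠ n := fun h => hne (by rw [h])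
    rw [hammingDist_toVec]
    have hx := xor_mem gensD _ hm _ hn
    have hval := chk_sound' _ gensD hDminc _ hx
    rcases (by simpa using hval : m ^^^ n = 0 ∨ 6 ≤ wt 21 (m ^^^ n)) with h | h
    · exact absurd (by have h' := congrArg (· ^^^ n) h; simp only [Nat.xor_assoc, Nat.xor_self, Nat.xor_zero, Nat.zero_xor] at h'; exact h') hmn
    · exact h
  · have hnd : (mkCode gensD).Nodup := nodup_mkCode pgensD hDgood
    rw [Dfin, Finset.card_image_of_injOn, List.toFinset_card_of_nodup hnd, mkCode_length]
    · decide
    · intro a ha b hb h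
      rw [Finset.mem_coe, List.mem_toFinset] at ha hb
      exact toVec_injOn (mkCode_lt gensD 21 hDlt a ha) (mkCode_lt gensD 21 hDlt b hb) h
  · intro d hd c hc
    obtain ⟨m, hm, rfl⟩ := mem_Dfin hd
    obtain ⟨n, hn, rfl⟩ := mem_Cfin hc
    refine mkCode_ind (fun m => ∀ n ∈ Cnats, ∑ i : Fin 21, toVec m i * toVec n i = 0)
      gensD ?_ ?_ m hm n hn
    · intro n _
      simp [toVec_zero]
    · intro g hg m' hPm' n hn
      rw [toVec_add]
      have expand : ∑ i : Fin 21, (toVec m' + toVec g) i * toVec n i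
          = (∑ i : Fin 21, toVec m' i * toVec n i)
            + ∑ i : Fin 21, toVec g i * toVec n i := by
        simp only [Pi.add_apply, add_mul]
        exact Finset.sum_add_distrib
      rw [expand, hPm' n hn, sum_orth (hOrth g hg n hn), add_zero]
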